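/- Let d ≥ 1 and p_1, …, p_d ∈ (0,1), set μ = p_1 + ⋯ + p_d and q = (p_1/μ, …, p_d/μ). If μ > 1 and λ(q) ≤ μ − 1, then the martingale W_n = X_n/μ^n of anisotropic oriented percolation on ℤ^d satisfies sup_n 𝔼[W_n²] < ∞. -/

import Mathlib

open MeasureTheory ProbabilityTheory

/-- The `i`-th standard basis vector of `ℤ^d`. -/
def stdBasis (d : ℕ) (i : Fin d) : Fin d → ℤ := fun j => if j = i then 1 else 0

/-- A percolation configuration: each oriented edge `⟨x, x + e i⟩`, encoded as the pair
`(x, i)`, is either open (`true`) or closed (`false`). -/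
abbrev Config (d : ℕ) := ((Fin d → ℤ) × Fin d) → Bool

/-- The position after `j` steps of the oriented path starting at the origin whose
sequence of step directions is `γ`. -/
def pathPos (d : ℕ) {n : ℕ} (γ : Fin n → Fin d) (j : ℕ) : Fin d → ℤ :=
  ∑ t ∈ Finset.univ.filter (fun t : Fin n => (t : ℕ) < j), stdBasis d (γ t)

/-- The oriented path with step directions `γ` starting at the origin is open in the
configuration `ω`: each of its oriented edges is open. -/
def pathOpen (d : ℕ) {n : ℕ} (ω : Config d) (γ : Fin n → Fin d) : Prop :=
  ∀ j : Fin n, ω (pathPos d γ (j : ℕ), γ j) = true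

/-- The open cluster of the origin: all vertices reachable from `0` by an open oriented path. -/
def cluster (d : ℕ) (ω : Config d) : Set (Fin d → ℤ) :=
  {x | ∃ (n : ℕ) (γ : Fin n → Fin d), pathOpen d ω γ ∧ pathPos d γ n = x}

/-- The position at time `n` of the `i`-th walk, given the family of steps `ξ`:
`S^i_n = ξ^i_1 + ⋯ + ξ^i_n`. -/
def walkSum {Ω : Type*} {k : ℕ} (ξ : Fin 2 × ℕ → Ω → (Fin k → ℤ)) (i : Fin 2)
    (n : ℕ) (ω : Ω) : Fin k → ℤ :=
  ∑ t ∈ Finset.range n, ξ (i, t) ω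

/-- The event that the two walks are at the same place at time `n`. -/
def meetEvent {Ω : Type*} {k : ℕ} (ξ : Fin 2 × ℕ → Ω → (Fin k → ℤ)) (n : ℕ) : Set Ω :=
  {ω | walkSum ξ 0 n ω = walkSum ξ 1 n ω}

/-- The event `{τ = n}` where `τ = inf {n ≥ 1 : S¹_n = S²_n}` is the first meeting
time of the two walks. -/
def tauEvent {Ω : Type*} {k : ℕ} (ξ : Fin 2 × ℕ → Ω → (Fin k → ℤ)) (n : ℕ) : Set Ω :=
  {ω | walkSum ξ 0 n ω = walkSum ξ 1 n ω ∧
    ∀ m : ℕ, 0 < m → m < n → walkSum ξ 0 m ω ≠ walkSum ξ 1 m ω}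

/-- `Xcount d n ω` is the number of open oriented paths of length `n` starting at the
origin in the configuration `ω`. -/
noncomputable def Xcount (d n : ℕ) (ω : Config d) : ℕ :=
  Nat.card {γ : Fin n → Fin d // pathOpen d ω γ}

open Finset
open scoped ENNReal NNReal
open scoped Classical


variable {d : ℕ}

lemma stdBasis_inj : Function.Injective (stdBasis d) := by
  intro i i' h
  by_contra hne
  have := congrFun h i
  simp only [stdBasis, if_pos rfl] at this
  rw [if_neg hne] at this
  exact one_ne_zero this

lemma pathPos_zero {n : ℕ} (γ : Fin n → Fin d) : pathPos d γ 0 = 0 := by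
  simp [pathPos]

lemma pathPos_succ {n : ℕ} (γ : Fin n → Fin d) (j : Fin n) :
    pathPos d γ ((j : ℕ) + 1) = pathPos d γ (j : ℕ) + stdBasis d (γ j) := by
  unfold pathPos
  have hfil : (univ.filter fun t : Fin n => (t : ℕ) < (j : ℕ) + 1)
      = insert j (univ.filter fun t : Fin n => (t : ℕ) < (j : ℕ)) := by
    ext t
    simp only [mem_filter, mem_univ, true_and, mem_insert]
    constructor
    · intro ht
      rcases Nat.lt_succ_iff_lt_or_eq.mp ht with h | h
      · exact Or.inr h
      · exact Or.inl (Fin.ext h)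
    · rintro (rfl | ht)
      · omega
      · omega
  rw [hfil, Finset.sum_insert (by simp)]
  ring

lemma pathPos_of_ge {n : ℕ} (γ : Fin n → Fin d) {j : ℕ} (h : n ≤ j) :
    pathPos d γ j = pathPos d γ n := by
  unfold pathPos
  congr 1
  ext t
  simp only [mem_filter, mem_univ, true_and]
  have := t.isLt
  omega

lemma card_filter_lt {n j : ℕ} (h : j ≤ n) :
    ((univ : Finset (Fin n)).filter fun t : Fin n => (t : ℕ) < j).card = j := by
  rw [← Finset.card_range j]
  apply Finset.card_bij (fun (a : Fin n) _ => (a : ℕ))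
  · intro a ha
    simp only [mem_filter, Finset.card_range] at ha
    simp only [Finset.mem_range]
    exact ha.2
  · intro a ha b hb hab
    exact Fin.ext hab
  · intro b hb
    simp only [Finset.mem_range, Finset.card_range] at hb ⊢
    exact ⟨⟨b, by omega⟩, by simp [mem_filter, hb], rfl⟩

lemma sum_stdBasis (i : Fin d) : ∑ k, stdBasis d i k = 1 := by
  simp [stdBasis]

lemma pathPos_apply {n : ℕ} (γ : Fin n → Fin d) (j : ℕ) (i : Fin d) :
    pathPos d γ j i = ∑ t ∈ univ.filter (fun t : Fin n => (t : ℕ) < j), stdBasis d (γ t) i := by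
  unfold pathPos
  simp [Finset.sum_apply]

lemma sum_pathPos {n : ℕ} (γ : Fin n → Fin d) {j : ℕ} (h : j ≤ n) :
    ∑ i, pathPos d γ j i = j := by
  have : ∑ i, pathPos d γ j i
      = ∑ t ∈ univ.filter (fun t : Fin n => (t : ℕ) < j), ∑ i, stdBasis d (γ t) i := by
    rw [Finset.sum_comm]
    exact Finset.sum_congr rfl fun i _ => pathPos_apply γ j i
  rw [this]
  simp only [sum_stdBasis]
  rw [Finset.sum_const, card_filter_lt h]
  simp

lemma pathPos_append_le {m k : ℕ} (γ : Fin m → Fin d) (δ : Fin k → Fin d) {j : ℕ}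
    (h : j ≤ m) : pathPos d (Fin.append γ δ) j = pathPos d γ j := by
  unfold pathPos
  rw [Finset.sum_filter, Finset.sum_filter, Fin.sum_univ_add]
  have h2 : ∀ i : Fin k, (if ((Fin.natAdd m i : Fin (m+k)) : ℕ) < j
      then stdBasis d (Fin.append γ δ (Fin.natAdd m i)) else 0) = 0 := by
    intro i
    rw [if_neg]
    simp only [Fin.coe_natAdd]
    omega
  simp only [h2, Finset.sum_const_zero, add_zero]
  refine Finset.sum_congr rfl fun i _ => ?_
  rw [Fin.append_left]
  simp only [Fin.coe_castAdd]

lemma pathPos_append_add {m k : ℕ} (γ : Fin m → Fin d) (δ : Fin k → Fin d) (j : ℕ) :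
    pathPos d (Fin.append γ δ) (m + j) = pathPos d γ m + pathPos d δ j := by
  unfold pathPos
  rw [Finset.sum_filter, Finset.sum_filter, Finset.sum_filter, Fin.sum_univ_add]
  congr 1
  · refine Finset.sum_congr rfl fun i _ => ?_
    rw [Fin.append_left]
    simp only [Fin.coe_castAdd]
    rw [if_pos (by omega), if_pos i.isLt]
  · refine Finset.sum_congr rfl fun i _ => ?_
    rw [Fin.append_right]
    simp only [Fin.coe_natAdd]
    congr 1
    simp only [eq_iff_iff]
    omega

section Comb

variable (d : ℕ) (p : Fin d → ℝ) (μ : ℝ)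

noncomputable def qv (i : Fin d) : ℝ := p i / μ

abbrev Pairs (n : ℕ) := (Fin n → Fin d) × (Fin n → Fin d)

noncomputable def Wq {n : ℕ} (π : Pairs d n) : ℝ :=
  ∏ j : Fin n, qv d p μ (π.1 j) * qv d p μ (π.2 j)

def Shared {n : ℕ} (π : Pairs d n) (j : Fin n) : Prop :=
  pathPos d π.1 (j : ℕ) = pathPos d π.2 (j : ℕ) ∧ π.1 j = π.2 j

noncomputable def W2 {n : ℕ} (π : Pairs d n) : ℝ :=
  ∏ j : Fin n, qv d p μ (π.1 j) * qv d p μ (π.2 j) *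
    (if Shared d π j then (p (π.1 j))⁻¹ else 1)

def Meets {n : ℕ} (π : Pairs d n) (m : ℕ) : Prop :=
  pathPos d π.1 m = pathPos d π.2 m

def FMA {n : ℕ} (π : Pairs d n) (m : ℕ) : Prop :=
  Meets d π m ∧ ∀ l, 0 < l → l < m → ¬ Meets d π l

def NoMeet {n : ℕ} (π : Pairs d n) : Prop :=
  ∀ m, 0 < m → m ≤ n → ¬ Meets d π m

noncomputable def aa (n : ℕ) : ℝ :=
  ∑ π : Pairs d n, if Meets d π n then Wq d p μ π else 0

noncomputable def bb (n : ℕ) : ℝ :=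
  ∑ π : Pairs d n, if FMA d π n then Wq d p μ π else 0

noncomputable def tt (n : ℕ) : ℝ :=
  ∑ π : Pairs d n, if NoMeet d π then Wq d p μ π else 0

noncomputable def DD (n : ℕ) : ℝ := ∑ π : Pairs d n, W2 d p μ π

variable {d}

/-- concatenation of a pair of prefixes with a pair of suffixes -/
def appPair {m k : ℕ} (σ : Pairs d m) (τ : Pairs d k) : Pairs d (m + k) :=
  (Fin.append σ.1 τ.1, Fin.append σ.2 τ.2)

lemma sum_pairs_split {m k : ℕ} (g : Pairs d (m + k) → ℝ) :
    ∑ π : Pairs d (m + k), g π = ∑ σ : Pairs d m, ∑ τ : Pairs d k, g (appPair σ τ) := by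
  have hbij : Function.Bijective (fun x : Pairs d m × Pairs d k => appPair x.1 x.2) := by
    constructor
    · rintro ⟨⟨a, b⟩, ⟨c, e⟩⟩ ⟨⟨a', b'⟩, ⟨c', e'⟩⟩ h
      simp only [appPair, Prod.mk.injEq] at h
      obtain ⟨h1, h2⟩ := h
      have l1 := congrArg (fun f => f ∘ Fin.castAdd k) h1
      have r1 := congrArg (fun f => f ∘ Fin.natAdd m) h1
      have l2 := congrArg (fun f => f ∘ Fin.castAdd k) h2
      have r2 := congrArg (fun f => f ∘ Fin.natAdd m) h2
      simp only [Function.comp_def] at l1 r1 l2 r2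
      have e1 : a = a' := funext fun i => by
        have := congrFun l1 i; simpa [Fin.append_left] using this
      have e2 : c = c' := funext fun i => by
        have := congrFun r1 i; simpa [Fin.append_right] using this
      have e3 : b = b' := funext fun i => by
        have := congrFun l2 i; simpa [Fin.append_left] using this
      have e4 : e = e' := funext fun i => by
        have := congrFun r2 i; simpa [Fin.append_right] using this
      simp [e1, e2, e3, e4]
    · rintro ⟨f, g'⟩
      refine ⟨⟨(fun i => f (Fin.castAdd k i), fun i => g' (Fin.castAdd k i)),
              (fun i => f (Fin.natAdd m i), fun i => g' (Fin.natAdd m i))⟩, ?_⟩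
      simp only [appPair, Prod.mk.injEq]
      exact ⟨Fin.append_castAdd_natAdd, Fin.append_castAdd_natAdd⟩
  have h1 : ∑ x : Pairs d m × Pairs d k, g (appPair x.1 x.2) = ∑ π : Pairs d (m + k), g π :=
    Fintype.sum_bijective _ hbij _ _ (fun x => rfl)
  rw [← h1, Fintype.sum_prod_type]

lemma meets_appPair_le {m k : ℕ} (σ : Pairs d m) (τ : Pairs d k) {l : ℕ} (h : l ≤ m) :
    Meets d (appPair σ τ) l ↔ Meets d σ l := by
  unfold Meets appPair
  rw [pathPos_append_le _ _ h, pathPos_append_le _ _ h]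

lemma meets_appPair_add {m k : ℕ} (σ : Pairs d m) (τ : Pairs d k) (hm : Meets d σ m) (j : ℕ) :
    Meets d (appPair σ τ) (m + j) ↔ Meets d τ j := by
  unfold Meets appPair
  rw [pathPos_append_add, pathPos_append_add]
  unfold Meets at hm
  rw [hm]
  constructor
  · intro h; exact add_left_cancel h
  · intro h; rw [h]

lemma fma_appPair {m k : ℕ} (σ : Pairs d m) (τ : Pairs d k) :
    FMA d (appPair σ τ) m ↔ FMA d σ m := by
  unfold FMA
  rw [meets_appPair_le σ τ le_rfl]
  constructor
  · rintro ⟨h1, h2⟩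
    exact ⟨h1, fun l hl hlm => by
      rw [← meets_appPair_le σ τ (le_of_lt hlm)]; exact h2 l hl hlm⟩
  · rintro ⟨h1, h2⟩
    exact ⟨h1, fun l hl hlm => by
      rw [meets_appPair_le σ τ (le_of_lt hlm)]; exact h2 l hl hlm⟩

lemma wq_appPair {m k : ℕ} (σ : Pairs d m) (τ : Pairs d k) :
    Wq d p μ (appPair σ τ) = Wq d p μ σ * Wq d p μ τ := by
  unfold Wq appPair
  rw [Fin.prod_univ_add]
  dsimp only
  congr 1
  · exact Finset.prod_congr rfl fun i _ => by rw [Fin.append_left, Fin.append_left]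
  · exact Finset.prod_congr rfl fun i _ => by rw [Fin.append_right, Fin.append_right]

lemma shared_appPair_left {m k : ℕ} (σ : Pairs d m) (τ : Pairs d k) (i : Fin m) :
    Shared d (appPair σ τ) (Fin.castAdd k i) ↔ Shared d σ i := by
  unfold Shared appPair
  simp only [Fin.coe_castAdd, Fin.append_left]
  rw [pathPos_append_le _ _ (le_of_lt i.isLt), pathPos_append_le _ _ (le_of_lt i.isLt)]

lemma shared_appPair_right {m k : ℕ} (σ : Pairs d m) (τ : Pairs d k) (hm : Meets d σ m)
    (i : Fin k) : Shared d (appPair σ τ) (Fin.natAdd m i) ↔ Shared d τ i := by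
  unfold Shared appPair
  simp only [Fin.coe_natAdd, Fin.append_right]
  rw [pathPos_append_add, pathPos_append_add]
  unfold Meets at hm
  rw [hm]
  constructor
  · rintro ⟨h1, h2⟩; exact ⟨add_left_cancel h1, h2⟩
  · rintro ⟨h1, h2⟩; exact ⟨by rw [h1], h2⟩

lemma w2_appPair {m k : ℕ} (σ : Pairs d m) (τ : Pairs d k) (hm : Meets d σ m) :
    W2 d p μ (appPair σ τ) = W2 d p μ σ * W2 d p μ τ := by
  unfold W2
  rw [Fin.prod_univ_add]
  congr 1
  · refine Finset.prod_congr rfl fun i _ => ?_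
    rw [show (appPair σ τ).1 (Fin.castAdd k i) = σ.1 i from Fin.append_left _ _ i,
        show (appPair σ τ).2 (Fin.castAdd k i) = σ.2 i from Fin.append_left _ _ i]
    congr 1
    simp only [eq_iff_iff, shared_appPair_left σ τ i]
  · refine Finset.prod_congr rfl fun i _ => ?_
    rw [show (appPair σ τ).1 (Fin.natAdd m i) = τ.1 i from Fin.append_right _ _ i,
        show (appPair σ τ).2 (Fin.natAdd m i) = τ.2 i from Fin.append_right _ _ i]
    congr 1
    simp only [eq_iff_iff, shared_appPair_right σ τ hm i]

end Comb

section Comb2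

variable {d : ℕ} (p : Fin d → ℝ) (μ : ℝ)

lemma shared_meets {n : ℕ} (π : Pairs d n) (j : Fin n) (h : Shared d π j) :
    Meets d π (j : ℕ) ∧ Meets d π ((j : ℕ) + 1) := by
  obtain ⟨h1, h2⟩ := h
  refine ⟨h1, ?_⟩
  unfold Meets
  rw [pathPos_succ, pathPos_succ, h1, h2]

lemma w2_eq_wq {n : ℕ} (π : Pairs d n) (h : ∀ j, ¬ Shared d π j) :
    W2 d p μ π = Wq d p μ π := by
  unfold W2 Wq
  exact Finset.prod_congr rfl fun j _ => by rw [if_neg (h j), mul_one]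

lemma fma_no_shared {m : ℕ} (π : Pairs d m) (h : FMA d π m) (hm : 2 ≤ m) (j : Fin m) :
    ¬ Shared d π j := by
  intro hs
  obtain ⟨hm1, hm2⟩ := shared_meets π j hs
  rcases Nat.eq_zero_or_pos (j : ℕ) with h0 | h0
  · rw [h0] at hm2
    exact h.2 1 one_pos (by omega) hm2
  · exact h.2 (j : ℕ) h0 j.isLt hm1

lemma nomeet_no_shared {n : ℕ} (π : Pairs d n) (h : NoMeet d π) (j : Fin n) :
    ¬ Shared d π j := by
  intro hs
  exact h ((j : ℕ) + 1) (Nat.succ_pos _) j.isLt (shared_meets π j hs).2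

lemma meets_zero {n : ℕ} (π : Pairs d n) : Meets d π 0 := by
  unfold Meets; rw [pathPos_zero, pathPos_zero]

lemma pathPos_one {n : ℕ} (γ : Fin n → Fin d) (hn : 0 < n) :
    pathPos d γ 1 = stdBasis d (γ ⟨0, hn⟩) := by
  have := pathPos_succ γ ⟨0, hn⟩
  simpa [pathPos_zero] using this

lemma meets_one_iff (π : Pairs d 1) : Meets d π 1 ↔ π.1 0 = π.2 0 := by
  unfold Meets
  rw [pathPos_one π.1 one_pos, pathPos_one π.2 one_pos]
  constructor
  · intro h
    exact stdBasis_inj h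
  · intro h
    rw [show π.1 ⟨0, one_pos⟩ = π.1 0 from rfl, show π.2 ⟨0, one_pos⟩ = π.2 0 from rfl, h]

lemma sum_pairs_one (F : Pairs d 1 → ℝ) :
    ∑ π : Pairs d 1, F π = ∑ i : Fin d, ∑ i' : Fin d, F (fun _ => i, fun _ => i') := by
  have hbij : Function.Bijective
      (fun x : Fin d × Fin d => ((fun _ => x.1, fun _ => x.2) : Pairs d 1)) := by
    constructor
    · rintro ⟨a, b⟩ ⟨a', b'⟩ h
      simp only [Prod.mk.injEq] at h
      exact Prod.ext (congrFun h.1 0) (congrFun h.2 0)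
    · intro π
      refine ⟨(π.1 0, π.2 0), ?_⟩
      refine Prod.ext (funext fun j => ?_) (funext fun j => ?_) <;>
        · rw [Subsingleton.elim j 0]
  have h1 : ∑ x : Fin d × Fin d, F (fun _ => x.1, fun _ => x.2) = ∑ π : Pairs d 1, F π :=
    Fintype.sum_bijective _ hbij _ _ (fun x => rfl)
  rw [← h1, Fintype.sum_prod_type]

lemma fma_one_iff (π : Pairs d 1) : FMA d π 1 ↔ π.1 0 = π.2 0 := by
  unfold FMA
  rw [meets_one_iff]
  constructor
  · exact fun h => h.1
  · exact fun h => ⟨h, fun l hl hl1 => by omega⟩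

lemma shared_zero_iff (π : Pairs d 1) : Shared d π 0 ↔ π.1 0 = π.2 0 := by
  unfold Shared
  simp only [Fin.val_zero, pathPos_zero, true_and]

lemma bb_one : bb d p μ 1 = ∑ i, (qv d p μ i) ^ 2 := by
  unfold bb
  rw [sum_pairs_one]
  refine Finset.sum_congr rfl fun i _ => ?_
  rw [Finset.sum_eq_single i]
  · rw [if_pos ((fma_one_iff _).mpr rfl)]
    unfold Wq
    simp [sq]
  · intro i' _ hne
    rw [if_neg]
    intro hc
    exact hne ((fma_one_iff _).mp hc).symm
  · simp

lemma head_one (hμ : μ = ∑ i, p i) (hμ0 : μ ≠ 0) (hp0 : ∀ i, p i ≠ 0) :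
    ∑ σ : Pairs d 1, (if FMA d σ 1 then W2 d p μ σ else 0) = μ⁻¹ := by
  rw [sum_pairs_one]
  have : ∀ i : Fin d, (∑ i' : Fin d, if FMA d ((fun _ => i, fun _ => i') : Pairs d 1) 1
      then W2 d p μ ((fun _ => i, fun _ => i') : Pairs d 1) else 0) = p i / μ ^ 2 := by
    intro i
    rw [Finset.sum_eq_single i]
    · rw [if_pos ((fma_one_iff _).mpr rfl)]
      unfold W2
      rw [Fin.prod_univ_one]
      rw [if_pos ((shared_zero_iff _).mpr rfl)]
      unfold qv
      have hpi := hp0 i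
      have hp : p i / μ * (p i / μ) * (p i)⁻¹ = p i / μ ^ 2 := by
        field_simp
      exact hp
    · intro i' _ hne
      rw [if_neg]
      intro hc
      exact hne ((fma_one_iff _).mp hc).symm
    · simp
  rw [Finset.sum_congr rfl fun i _ => this i]
  rw [← Finset.sum_div, ← hμ]
  rw [sq]
  field_simp

lemma sum_prod_fn (f : Fin d → ℝ) (n : ℕ) :
    ∑ γ : Fin n → Fin d, ∏ j : Fin n, f (γ j) = (∑ i, f i) ^ n := by
  induction n with
  | zero => simp
  | succ n ih =>
    have key : ∀ x : Fin d × (Fin n → Fin d),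
        (∏ j : Fin (n + 1), f ((Fin.consEquiv (fun _ : Fin (n+1) => Fin d)) x j))
          = f x.1 * ∏ j : Fin n, f (x.2 j) := by
      rintro ⟨x, δ⟩
      simp only [Fin.consEquiv, Equiv.coe_fn_mk]
      rw [Fin.prod_univ_succ]
      simp
    calc ∑ γ : Fin (n + 1) → Fin d, ∏ j : Fin (n + 1), f (γ j)
        = ∑ x : Fin d × (Fin n → Fin d),
            ∏ j : Fin (n + 1), f ((Fin.consEquiv (fun _ : Fin (n+1) => Fin d)) x j) :=
          (Fintype.sum_equiv (Fin.consEquiv (fun _ : Fin (n+1) => Fin d)) _ _ (fun x => rfl)).symm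
      _ = ∑ x : Fin d × (Fin n → Fin d), f x.1 * ∏ j : Fin n, f (x.2 j) :=
          Finset.sum_congr rfl fun x _ => key x
      _ = ∑ i : Fin d, ∑ δ : Fin n → Fin d, f i * ∏ j : Fin n, f (δ j) :=
          Fintype.sum_prod_type _
      _ = (∑ i, f i) * ∑ δ : Fin n → Fin d, ∏ j : Fin n, f (δ j) :=
          (Finset.sum_mul_sum _ _ _ _).symm
      _ = (∑ i, f i) ^ (n + 1) := by rw [ih, pow_succ, mul_comm]

lemma sum_wq_all (hq : (∑ i, qv d p μ i) = 1) (n : ℕ) :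
    ∑ π : Pairs d n, Wq d p μ π = 1 := by
  unfold Wq
  rw [Fintype.sum_prod_type]
  have : ∀ γ : Fin n → Fin d, ∑ γ' : Fin n → Fin d,
      ∏ j : Fin n, qv d p μ (γ j) * qv d p μ (γ' j)
      = (∏ j : Fin n, qv d p μ (γ j)) * ∑ γ' : Fin n → Fin d, ∏ j : Fin n, qv d p μ (γ' j) := by
    intro γ
    rw [Finset.mul_sum]
    exact Finset.sum_congr rfl fun γ' _ => by rw [Finset.prod_mul_distrib]
  rw [Finset.sum_congr rfl fun γ _ => this γ]
  rw [sum_prod_fn, hq, one_pow, ← Finset.sum_mul, sum_prod_fn, hq, one_pow, one_mul]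

lemma qv_nonneg (hp0 : ∀ i, 0 ≤ p i) (hμ0 : 0 ≤ μ) (i : Fin d) : 0 ≤ qv d p μ i :=
  div_nonneg (hp0 i) hμ0

lemma wq_nonneg (hp0 : ∀ i, 0 ≤ p i) (hμ0 : 0 ≤ μ) {n : ℕ} (π : Pairs d n) :
    0 ≤ Wq d p μ π :=
  Finset.prod_nonneg fun j _ => mul_nonneg (qv_nonneg p μ hp0 hμ0 _) (qv_nonneg p μ hp0 hμ0 _)

lemma w2_nonneg (hp0 : ∀ i, 0 ≤ p i) (hμ0 : 0 ≤ μ) {n : ℕ} (π : Pairs d n) :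
    0 ≤ W2 d p μ π := by
  refine Finset.prod_nonneg fun j _ => ?_
  refine mul_nonneg (mul_nonneg (qv_nonneg p μ hp0 hμ0 _) (qv_nonneg p μ hp0 hμ0 _)) ?_
  split
  · exact inv_nonneg.mpr (hp0 _)
  · exact zero_le_one

lemma tt_le_one (hp0 : ∀ i, 0 ≤ p i) (hμ0 : 0 ≤ μ) (hq : (∑ i, qv d p μ i) = 1) (n : ℕ) :
    tt d p μ n ≤ 1 := by
  rw [← sum_wq_all p μ hq n]
  unfold tt
  refine Finset.sum_le_sum fun π _ => ?_
  split
  · exact le_rfl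
  · exact wq_nonneg p μ hp0 hμ0 π

lemma sum_partition {n : ℕ} (hn : 1 ≤ n) (f : Pairs d n → ℝ) :
    ∑ π : Pairs d n, f π
      = (∑ m ∈ Finset.Icc 1 n, ∑ π : Pairs d n, if FMA d π m then f π else 0)
        + ∑ π : Pairs d n, if NoMeet d π then f π else 0 := by
  rw [Finset.sum_comm, ← Finset.sum_add_distrib]
  refine (Finset.sum_congr rfl fun π _ => ?_).symm
  by_cases h : ∃ m, 0 < m ∧ m ≤ n ∧ Meets d π m
  · set m₀ := Nat.find h with hm₀
    obtain ⟨hpos, hle, hmeets⟩ := Nat.find_spec h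
    have hmem : m₀ ∈ Finset.Icc 1 n := Finset.mem_Icc.mpr ⟨hpos, hle⟩
    have claim : ∀ m ∈ Finset.Icc 1 n, (FMA d π m ↔ m = m₀) := by
      intro m hm
      rw [Finset.mem_Icc] at hm
      constructor
      · intro hf
        have h1 : m₀ ≤ m := Nat.find_min' h ⟨by omega, hm.2, hf.1⟩
        rcases Nat.lt_or_ge m₀ m with hlt | hge
        · exact absurd hmeets (hf.2 m₀ hpos hlt)
        · omega
      · rintro rfl
        refine ⟨hmeets, fun l hl hlm hml => ?_⟩
        exact Nat.find_min h hlm ⟨hl, by omega, hml⟩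
    have hnm : ¬ NoMeet d π := fun hh => hh m₀ hpos hle hmeets
    rw [if_neg hnm, add_zero]
    rw [Finset.sum_congr rfl fun m hm => if_congr (claim m hm) rfl rfl]
    rw [Finset.sum_ite_eq' (Finset.Icc 1 n) m₀ (fun _ => f π), if_pos hmem]
  · push_neg at h
    have hnm : NoMeet d π := fun m hm hmn => h m hm hmn
    rw [if_pos hnm]
    have : ∀ m ∈ Finset.Icc 1 n, (if FMA d π m then f π else 0) = 0 := by
      intro m hm
      rw [Finset.mem_Icc] at hm
      rw [if_neg]
      intro hf
      exact h m (by omega) hm.2 hf.1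
    rw [Finset.sum_congr rfl this, Finset.sum_const_zero, zero_add]

lemma fiberD {m k : ℕ} :
    ∑ π : Pairs d (m + k), (if FMA d π m then W2 d p μ π else 0)
      = (∑ σ : Pairs d m, if FMA d σ m then W2 d p μ σ else 0) * DD d p μ k := by
  rw [sum_pairs_split]
  have : ∀ σ : Pairs d m, ∀ τ : Pairs d k,
      (if FMA d (appPair σ τ) m then W2 d p μ (appPair σ τ) else 0)
        = (if FMA d σ m then W2 d p μ σ * W2 d p μ τ else 0) := by
    intro σ τ
    by_cases h : FMA d σ m
    · rw [if_pos ((fma_appPair σ τ).mpr h), if_pos h, w2_appPair p μ σ τ h.1]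
    · rw [if_neg (fun hc => h ((fma_appPair σ τ).mp hc)), if_neg h]
  rw [Finset.sum_congr rfl fun σ _ => Finset.sum_congr rfl fun τ _ => this σ τ]
  rw [Finset.sum_mul]
  refine Finset.sum_congr rfl fun σ _ => ?_
  by_cases h : FMA d σ m
  · simp only [if_pos h]
    rw [← Finset.mul_sum]
    rfl
  · simp only [if_neg h]
    rw [Finset.sum_const_zero, zero_mul]

end Comb2

section Comb3

variable {d : ℕ} (p : Fin d → ℝ) (μ : ℝ)

lemma fiberA {m k : ℕ} :
    ∑ π : Pairs d (m + k), (if Meets d π (m + k) ∧ FMA d π m then Wq d p μ π else 0)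
      = bb d p μ m * aa d p μ k := by
  rw [sum_pairs_split]
  have key : ∀ σ : Pairs d m, ∀ τ : Pairs d k,
      (if Meets d (appPair σ τ) (m + k) ∧ FMA d (appPair σ τ) m then Wq d p μ (appPair σ τ) else 0)
        = (if FMA d σ m then Wq d p μ σ else 0) * (if Meets d τ k then Wq d p μ τ else 0) := by
    intro σ τ
    by_cases h1 : FMA d σ m
    · by_cases h2 : Meets d τ k
      · rw [if_pos, if_pos h1, if_pos h2, wq_appPair]
        exact ⟨(meets_appPair_add σ τ h1.1 k).mpr h2, (fma_appPair σ τ).mpr h1⟩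
      · rw [if_neg, if_neg h2, mul_zero]
        rintro ⟨hc, -⟩
        exact h2 ((meets_appPair_add σ τ h1.1 k).mp hc)
    · rw [if_neg, if_neg h1, zero_mul]
      rintro ⟨-, hc⟩
      exact h1 ((fma_appPair σ τ).mp hc)
  rw [Finset.sum_congr rfl fun σ _ => Finset.sum_congr rfl fun τ _ => key σ τ]
  rw [← Finset.sum_mul_sum]
  rfl

lemma headD_eval {m : ℕ} (hm : 2 ≤ m) :
    ∑ σ : Pairs d m, (if FMA d σ m then W2 d p μ σ else 0) = bb d p μ m := by
  unfold bb
  refine Finset.sum_congr rfl fun σ _ => ?_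
  by_cases h : FMA d σ m
  · rw [if_pos h, if_pos h, w2_eq_wq p μ σ (fma_no_shared σ h hm)]
  · rw [if_neg h, if_neg h]

lemma tt_eval (n : ℕ) :
    ∑ π : Pairs d n, (if NoMeet d π then W2 d p μ π else 0) = tt d p μ n := by
  unfold tt
  refine Finset.sum_congr rfl fun π _ => ?_
  by_cases h : NoMeet d π
  · rw [if_pos h, if_pos h, w2_eq_wq p μ π (nomeet_no_shared π h)]
  · rw [if_neg h, if_neg h]

lemma recD {n : ℕ} (hn : 1 ≤ n) (hμ : μ = ∑ i, p i) (hμ0 : μ ≠ 0) (hp0 : ∀ i, p i ≠ 0) :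
    DD d p μ n = (∑ m ∈ Finset.Icc 1 n, (if m = 1 then μ⁻¹ else bb d p μ m) * DD d p μ (n - m))
      + tt d p μ n := by
  have h1 := sum_partition hn (fun π => W2 d p μ π)
  unfold DD
  rw [h1, tt_eval]
  congr 1
  refine Finset.sum_congr rfl fun m hm => ?_
  rw [Finset.mem_Icc] at hm
  obtain ⟨k, rfl⟩ : ∃ k, n = m + k := ⟨n - m, by omega⟩
  rw [show m + k - m = k from by omega, fiberD]
  congr 1
  by_cases h2 : m = 1
  · subst h2
    rw [if_pos rfl]
    exact head_one p μ hμ hμ0 hp0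
  · rw [if_neg h2]
    exact headD_eval p μ (by omega)

lemma recA {n : ℕ} (hn : 1 ≤ n) :
    aa d p μ n = ∑ m ∈ Finset.Icc 1 n, bb d p μ m * aa d p μ (n - m) := by
  have h1 := sum_partition hn (fun π => if Meets d π n then Wq d p μ π else 0)
  have h2 : ∀ π : Pairs d n,
      (if NoMeet d π then (if Meets d π n then Wq d p μ π else 0) else 0) = 0 := by
    intro π
    by_cases h : NoMeet d π
    · rw [if_pos h, if_neg (h n hn le_rfl)]
    · rw [if_neg h]
  have hL : aa d p μ n = ∑ m ∈ Finset.Icc 1 n,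
      ∑ π : Pairs d n, (if FMA d π m then (if Meets d π n then Wq d p μ π else 0) else 0) := by
    unfold aa
    rw [h1, Finset.sum_congr rfl fun π _ => h2 π, Finset.sum_const_zero, add_zero]
  rw [hL]
  refine Finset.sum_congr rfl fun m hm => ?_
  rw [Finset.mem_Icc] at hm
  obtain ⟨k, rfl⟩ : ∃ k, n = m + k := ⟨n - m, by omega⟩
  rw [show m + k - m = k from by omega, ← fiberA]
  refine Finset.sum_congr rfl fun π _ => ?_
  by_cases ha : FMA d π m <;> by_cases hb : Meets d π (m + k) <;> simp [ha, hb]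

instance uniquePairsZero : Unique (Pairs d 0) := by
  refine ⟨⟨(Fin.elim0, Fin.elim0)⟩, ?_⟩
  rintro ⟨f, g⟩
  refine Prod.ext (funext fun x => x.elim0) (funext fun x => x.elim0)

lemma aa_zero : aa d p μ 0 = 1 := by
  unfold aa
  rw [Fintype.sum_unique]
  rw [if_pos (meets_zero _)]
  unfold Wq
  simp

lemma DD_zero : DD d p μ 0 = 1 := by
  unfold DD
  rw [Fintype.sum_unique]
  unfold W2
  simp

lemma aa_nonneg (hp0 : ∀ i, 0 ≤ p i) (hμ0 : 0 ≤ μ) (n : ℕ) : 0 ≤ aa d p μ n :=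
  Finset.sum_nonneg fun π _ => by
    split
    · exact wq_nonneg p μ hp0 hμ0 π
    · exact le_rfl

lemma bb_nonneg (hp0 : ∀ i, 0 ≤ p i) (hμ0 : 0 ≤ μ) (n : ℕ) : 0 ≤ bb d p μ n :=
  Finset.sum_nonneg fun π _ => by
    split
    · exact wq_nonneg p μ hp0 hμ0 π
    · exact le_rfl

lemma DD_nonneg (hp0 : ∀ i, 0 ≤ p i) (hμ0 : 0 ≤ μ) (n : ℕ) : 0 ≤ DD d p μ n :=
  Finset.sum_nonneg fun π _ => w2_nonneg p μ hp0 hμ0 π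

noncomputable def AA (N : ℕ) : ℝ := ∑ n ∈ Finset.Icc 1 N, aa d p μ n

noncomputable def BB (M : ℕ) : ℝ := ∑ m ∈ Finset.Icc 1 M, bb d p μ m

lemma renewal_ineq (hp0 : ∀ i, 0 ≤ p i) (hμ0 : 0 ≤ μ) (M K : ℕ) :
    BB p μ M * (1 + AA p μ K) ≤ AA p μ (M + K) := by
  have hone : (1 : ℝ) + AA p μ K = ∑ j ∈ Finset.range (K + 1), aa d p μ j := by
    have : Finset.range (K + 1) = insert 0 (Finset.Icc 1 K) := by
      ext x
      simp only [Finset.mem_range, Finset.mem_insert, Finset.mem_Icc]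
      omega
    rw [this, Finset.sum_insert (by simp), aa_zero]
    rfl
  rw [hone]
  unfold BB
  rw [Finset.sum_mul_sum]
  rw [← Finset.sum_product']
  set s := Finset.Icc 1 M ×ˢ Finset.range (K + 1) with hs
  set T := (Finset.Icc 1 (M + K)).sigma (fun n => Finset.Icc 1 n) with hT
  have hinj : Set.InjOn (fun x : ℕ × ℕ => (⟨x.1 + x.2, x.1⟩ : Σ _ : ℕ, ℕ)) s := by
    rintro ⟨a, b⟩ - ⟨c, e⟩ - h
    have h1 : a + b = c + e := congrArg Sigma.fst h
    have h2 : a = c := congrArg (fun y : Σ _ : ℕ, ℕ => y.2) h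
    simp only [Prod.mk.injEq]
    omega
  have step1 : ∑ x ∈ s, bb d p μ x.1 * aa d p μ x.2
      = ∑ y ∈ s.image (fun x : ℕ × ℕ => (⟨x.1 + x.2, x.1⟩ : Σ _ : ℕ, ℕ)),
          bb d p μ y.2 * aa d p μ (y.1 - y.2) := by
    rw [Finset.sum_image hinj]
    refine Finset.sum_congr rfl fun x _ => ?_
    simp only
    rw [show x.1 + x.2 - x.1 = x.2 from by omega]
  rw [step1]
  have hsub : s.image (fun x : ℕ × ℕ => (⟨x.1 + x.2, x.1⟩ : Σ _ : ℕ, ℕ)) ⊆ T := by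
    intro y hy
    rw [Finset.mem_image] at hy
    obtain ⟨x, hx, rfl⟩ := hy
    rw [hs, Finset.mem_product, Finset.mem_Icc, Finset.mem_range] at hx
    rw [hT, Finset.mem_sigma, Finset.mem_Icc, Finset.mem_Icc]
    dsimp only
    omega
  have hnn : ∀ y ∈ T, y ∉ s.image (fun x : ℕ × ℕ => (⟨x.1 + x.2, x.1⟩ : Σ _ : ℕ, ℕ)) →
      0 ≤ bb d p μ y.2 * aa d p μ (y.1 - y.2) := fun y _ _ =>
    mul_nonneg (bb_nonneg p μ hp0 hμ0 _) (aa_nonneg p μ hp0 hμ0 _)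
  refine le_trans (Finset.sum_le_sum_of_subset_of_nonneg hsub hnn) ?_
  rw [hT, Finset.sum_sigma]
  unfold AA
  refine le_of_eq (Finset.sum_congr rfl fun n hn => ?_)
  rw [Finset.mem_Icc] at hn
  exact (recA p μ hn.1).symm

lemma DD_le (hμ : μ = ∑ i, p i) (hμ1 : 1 < μ) (hp0 : ∀ i, 0 < p i)
    (hq : (∑ i, qv d p μ i) = 1)
    (hBB : ∀ M, BB p μ M ≤ (μ - 1) / μ)
    (hπ : 0 < ∑ i, (qv d p μ i) ^ 2) (hπ1 : (∑ i, (qv d p μ i) ^ 2) ≤ 1) :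
    ∀ n, DD d p μ n ≤ (∑ i, (qv d p μ i) ^ 2)⁻¹ := by
  set π₀ := ∑ i, (qv d p μ i) ^ 2 with hπ₀
  have hμ0 : (0 : ℝ) < μ := by linarith
  intro n
  induction n using Nat.strong_induction_on with
  | _ n ih =>
    rcases Nat.eq_zero_or_pos n with rfl | hn
    · rw [DD_zero]
      rw [← one_div]
      exact (le_div_iff₀ hπ).mpr (by linarith)
    · rw [recD p μ hn hμ (ne_of_gt hμ0) (fun i => ne_of_gt (hp0 i))]
      have hccnn : ∀ m ∈ Finset.Icc 1 n, 0 ≤ (if m = 1 then μ⁻¹ else bb d p μ m) := by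
        intro m _
        split
        · positivity
        · exact bb_nonneg p μ (fun i => le_of_lt (hp0 i)) (le_of_lt hμ0) m
      have hsum_cc : (∑ m ∈ Finset.Icc 1 n, (if m = 1 then μ⁻¹ else bb d p μ m)) ≤ 1 - π₀ := by
        have hsplit : Finset.Icc 1 n = insert 1 (Finset.Icc 2 n) := by
          ext x
          simp only [Finset.mem_Icc, Finset.mem_insert]
          omega
        rw [hsplit, Finset.sum_insert (by simp), if_pos rfl]
        have h2 : ∀ m ∈ Finset.Icc 2 n, (if m = 1 then μ⁻¹ else bb d p μ m) = bb d p μ m := by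
          intro m hm
          rw [Finset.mem_Icc] at hm
          rw [if_neg (by omega)]
        rw [Finset.sum_congr rfl h2]
        have hBBn : bb d p μ 1 + ∑ m ∈ Finset.Icc 2 n, bb d p μ m = BB p μ n := by
          unfold BB
          rw [hsplit, Finset.sum_insert (by simp)]
        have hbb1 : bb d p μ 1 = π₀ := by rw [bb_one]
        have := hBB n
        rw [← hBBn, hbb1] at this
        have hfrac : μ⁻¹ + (μ - 1) / μ = 1 := by field_simp; ring
        linarith
      have hstep : ∀ m ∈ Finset.Icc 1 n,
          (if m = 1 then μ⁻¹ else bb d p μ m) * DD d p μ (n - m)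
            ≤ (if m = 1 then μ⁻¹ else bb d p μ m) * π₀⁻¹ := by
        intro m hm
        rw [Finset.mem_Icc] at hm
        exact mul_le_mul_of_nonneg_left (ih (n - m) (by omega)) (hccnn m (by simp [Finset.mem_Icc]; omega))
      have h3 : (∑ m ∈ Finset.Icc 1 n, (if m = 1 then μ⁻¹ else bb d p μ m) * DD d p μ (n - m))
          ≤ (1 - π₀) * π₀⁻¹ := by
        calc ∑ m ∈ Finset.Icc 1 n, (if m = 1 then μ⁻¹ else bb d p μ m) * DD d p μ (n - m)
            ≤ ∑ m ∈ Finset.Icc 1 n, (if m = 1 then μ⁻¹ else bb d p μ m) * π₀⁻¹ :=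
              Finset.sum_le_sum hstep
          _ = (∑ m ∈ Finset.Icc 1 n, (if m = 1 then μ⁻¹ else bb d p μ m)) * π₀⁻¹ := by
              rw [Finset.sum_mul]
          _ ≤ (1 - π₀) * π₀⁻¹ :=
              mul_le_mul_of_nonneg_right hsum_cc (inv_nonneg.mpr (le_of_lt hπ))
      have h4 : tt d p μ n ≤ 1 :=
        tt_le_one p μ (fun i => le_of_lt (hp0 i)) (le_of_lt hμ0) hq n
      have h5 : (1 - π₀) * π₀⁻¹ + 1 = π₀⁻¹ := by
        field_simp
        ring
      linarith

end Comb3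

section Perc

variable {d : ℕ} (p : Fin d → ℝ) (μ : ℝ)

/-- the `j`-th edge of the path `γ` -/
def edgeOf {n : ℕ} (γ : Fin n → Fin d) (j : Fin n) : (Fin d → ℤ) × Fin d :=
  (pathPos d γ (j : ℕ), γ j)

noncomputable def edgeSet {n : ℕ} (γ : Fin n → Fin d) : Finset ((Fin d → ℤ) × Fin d) :=
  Finset.image (edgeOf γ) Finset.univ

lemma edgeOf_eq_time {n : ℕ} (γ γ' : Fin n → Fin d) {j j' : Fin n}
    (h : edgeOf γ j = edgeOf γ' j') : (j : ℕ) = (j' : ℕ) := by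
  unfold edgeOf at h
  have h1 : pathPos d γ (j : ℕ) = pathPos d γ' (j' : ℕ) := congrArg Prod.fst h
  have h2 : ∑ i, pathPos d γ (j : ℕ) i = ∑ i, pathPos d γ' (j' : ℕ) i := by rw [h1]
  rw [sum_pathPos γ (le_of_lt j.isLt), sum_pathPos γ' (le_of_lt j'.isLt)] at h2
  exact_mod_cast h2

lemma edgeOf_inj {n : ℕ} (γ : Fin n → Fin d) : Function.Injective (edgeOf γ) :=
  fun j j' h => Fin.ext (edgeOf_eq_time γ γ h)

lemma pathOpen_iff_edges {n : ℕ} (ω : Config d) (γ : Fin n → Fin d) :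
    pathOpen d ω γ ↔ ∀ e ∈ edgeSet γ, ω e = true := by
  unfold pathOpen edgeSet edgeOf
  constructor
  · intro h e he
    rw [Finset.mem_image] at he
    obtain ⟨j, -, rfl⟩ := he
    exact h j
  · intro h j
    exact h _ (Finset.mem_image.mpr ⟨j, Finset.mem_univ j, rfl⟩)

lemma measurable_pathOpen {n : ℕ} (γ : Fin n → Fin d) :
    MeasurableSet {ω : Config d | pathOpen d ω γ} := by
  have : {ω : Config d | pathOpen d ω γ}
      = ⋂ j : Fin n, (fun ω : Config d => ω (edgeOf γ j)) ⁻¹' {true} := by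
    ext ω
    simp only [Set.mem_setOf_eq, Set.mem_iInter, Set.mem_preimage, Set.mem_singleton_iff]
    rfl
  rw [this]
  exact MeasurableSet.iInter fun j =>
    (measurable_pi_apply _) (measurableSet_singleton true)

lemma measure_open_pair {n : ℕ} (P : Measure (Config d))
    (hindep : iIndepFun (fun e (ω : Config d) => ω e) P)
    (hmarg : ∀ e : (Fin d → ℤ) × Fin d, P {ω : Config d | ω e = true} = ENNReal.ofReal (p e.2))
    (γ γ' : Fin n → Fin d) :
    P ({ω | pathOpen d ω γ} ∩ {ω | pathOpen d ω γ'})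
      = ∏ e ∈ edgeSet γ ∪ edgeSet γ', ENNReal.ofReal (p e.2) := by
  have hset : {ω : Config d | pathOpen d ω γ} ∩ {ω | pathOpen d ω γ'}
      = ⋂ e ∈ (edgeSet γ ∪ edgeSet γ' : Finset _), (fun ω : Config d => ω e) ⁻¹' {true} := by
    ext ω
    simp only [Set.mem_inter_iff, Set.mem_setOf_eq, Set.mem_iInter, Set.mem_preimage,
      Set.mem_singleton_iff, Finset.mem_union, pathOpen_iff_edges]
    constructor
    · rintro ⟨h1, h2⟩ e he
      rcases he with he | he
      · exact h1 e he
      · exact h2 e he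
    · intro h
      exact ⟨fun e he => h e (Or.inl he), fun e he => h e (Or.inr he)⟩
  rw [hset]
  rw [hindep.measure_inter_preimage_eq_mul (edgeSet γ ∪ edgeSet γ')
    (sets := fun _ => {true}) (fun e _ => measurableSet_singleton true)]
  refine Finset.prod_congr rfl fun e _ => ?_
  rw [← hmarg e]
  congr 1

lemma prod_edge_union {n : ℕ} (hp0 : ∀ i, p i ≠ 0) (γ γ' : Fin n → Fin d) :
    ∏ e ∈ edgeSet γ ∪ edgeSet γ', p e.2
      = (∏ j : Fin n, p (γ j)) * (∏ j : Fin n, p (γ' j)) *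
        (∏ j ∈ Finset.univ.filter (fun j : Fin n => Shared d (γ, γ') j), p (γ j))⁻¹ := by
  have hAB : edgeSet γ ∩ edgeSet γ'
      = Finset.image (edgeOf γ) (Finset.univ.filter (fun j : Fin n => Shared d (γ, γ') j)) := by
    ext e
    simp only [Finset.mem_inter, edgeSet, Finset.mem_image, Finset.mem_filter, Finset.mem_univ,
      true_and]
    constructor
    · rintro ⟨⟨j, rfl⟩, ⟨j', he'⟩⟩
      have ht : (j' : ℕ) = (j : ℕ) := edgeOf_eq_time γ' γ he'
      refine ⟨j, ⟨?_, ?_⟩, rfl⟩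
      · have h1 : pathPos d γ' (j' : ℕ) = pathPos d γ (j : ℕ) := congrArg Prod.fst he'
        rw [ht] at h1
        exact h1.symm
      · have h2 : γ' j' = γ j := congrArg Prod.snd he'
        have : j' = Fin.mk (j : ℕ) j.isLt := Fin.ext ht
        rw [this] at h2
        exact h2.symm
    · rintro ⟨j, ⟨hs1, hs2⟩, rfl⟩
      refine ⟨⟨j, rfl⟩, ⟨j, ?_⟩⟩
      have hs1' : pathPos d γ (j : ℕ) = pathPos d γ' (j : ℕ) := hs1
      have hs2' : γ j = γ' j := hs2
      unfold edgeOf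
      rw [hs1', hs2']
  have key : (∏ e ∈ edgeSet γ ∪ edgeSet γ', p e.2) * ∏ e ∈ edgeSet γ ∩ edgeSet γ', p e.2
      = (∏ e ∈ edgeSet γ, p e.2) * ∏ e ∈ edgeSet γ', p e.2 := Finset.prod_union_inter
  have h1 : ∏ e ∈ edgeSet γ, p e.2 = ∏ j : Fin n, p (γ j) := by
    unfold edgeSet
    rw [Finset.prod_image (fun j _ j' _ h => edgeOf_inj γ h)]
    rfl
  have h2 : ∏ e ∈ edgeSet γ', p e.2 = ∏ j : Fin n, p (γ' j) := by
    unfold edgeSet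
    rw [Finset.prod_image (fun j _ j' _ h => edgeOf_inj γ' h)]
    rfl
  have h3 : ∏ e ∈ edgeSet γ ∩ edgeSet γ', p e.2
      = ∏ j ∈ Finset.univ.filter (fun j : Fin n => Shared d (γ, γ') j), p (γ j) := by
    rw [hAB, Finset.prod_image (fun j _ j' _ h => edgeOf_inj γ h)]
    rfl
  have hne : (∏ j ∈ Finset.univ.filter (fun j : Fin n => Shared d (γ, γ') j), p (γ j)) ≠ 0 :=
    Finset.prod_ne_zero_iff.mpr fun j _ => hp0 _
  rw [h1, h2, h3] at key
  rw [← key, mul_inv_cancel_right₀ hne]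

lemma w2_edges {n : ℕ} (hp0 : ∀ i, p i ≠ 0) (hμ0 : μ ≠ 0) (γ γ' : Fin n → Fin d) :
    μ ^ n * μ ^ n * W2 d p μ (γ, γ') = ∏ e ∈ edgeSet γ ∪ edgeSet γ', p e.2 := by
  rw [prod_edge_union p hp0 γ γ']
  unfold W2 qv
  rw [show (∏ j : Fin n, p ((γ, γ').1 j) / μ * (p ((γ, γ').2 j) / μ) *
      (if Shared d (γ, γ') j then (p ((γ, γ').1 j))⁻¹ else 1))
    = (∏ j : Fin n, p (γ j) / μ * (p (γ' j) / μ)) *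
      ∏ j : Fin n, (if Shared d (γ, γ') j then (p (γ j))⁻¹ else 1) from by
      rw [← Finset.prod_mul_distrib]]
  rw [show (∏ j : Fin n, (if Shared d (γ, γ') j then (p (γ j))⁻¹ else 1))
      = ∏ j ∈ Finset.univ.filter (fun j : Fin n => Shared d (γ, γ') j), (p (γ j))⁻¹ from
    (Finset.prod_filter _ _).symm]
  rw [Finset.prod_inv_distrib]
  rw [show (∏ j : Fin n, p (γ j) / μ * (p (γ' j) / μ))
      = (∏ j : Fin n, p (γ j)) * (∏ j : Fin n, p (γ' j)) / (μ ^ n * μ ^ n) from by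
    rw [Finset.prod_congr rfl fun j _ => show p (γ j) / μ * (p (γ' j) / μ)
        = p (γ j) * p (γ' j) / (μ * μ) from by ring]
    rw [Finset.prod_div_distrib, Finset.prod_mul_distrib, Finset.prod_mul_distrib]
    simp [Finset.prod_const, Finset.card_univ]]
  have hμn : μ ^ n * μ ^ n ≠ 0 := by positivity
  have hgen : ∀ X C : ℝ, μ ^ n * μ ^ n * (X / (μ ^ n * μ ^ n) * C) = X * C := by
    intro X C
    field_simp
  rw [hgen]

end Perc

section Lint

variable {d : ℕ} (p : Fin d → ℝ) (μ : ℝ)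

lemma Xcount_cast (n : ℕ) (ω : Config d) :
    (Xcount d n ω : ℝ≥0∞) = ∑ γ : Fin n → Fin d, (if pathOpen d ω γ then (1:ℝ≥0∞) else 0) := by
  have h1 : Xcount d n ω = (Finset.univ.filter (fun γ : Fin n → Fin d => pathOpen d ω γ)).card := by
    unfold Xcount
    rw [Nat.card_eq_fintype_card, Fintype.card_subtype]
  rw [h1, Finset.card_filter]
  push_cast
  refine Finset.sum_congr rfl fun γ _ => ?_
  split <;> simp

lemma measurable_pair_event {n : ℕ} (π : Pairs d n) :
    MeasurableSet ({ω : Config d | pathOpen d ω π.1} ∩ {ω | pathOpen d ω π.2}) :=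
  (measurable_pathOpen π.1).inter (measurable_pathOpen π.2)

lemma lintegral_W {n : ℕ} (P : Measure (Config d)) [IsProbabilityMeasure P]
    (hindep : iIndepFun (fun e (ω : Config d) => ω e) P)
    (hmarg : ∀ e : (Fin d → ℤ) × Fin d, P {ω : Config d | ω e = true} = ENNReal.ofReal (p e.2))
    (hp0 : ∀ i, 0 < p i) (hμpos : 0 < μ)
    (W : ℕ → Config d → ℝ) (hW : ∀ n ω, W n ω = (Xcount d n ω : ℝ) / μ ^ n) :
    ∫⁻ ω, ENNReal.ofReal ((W n ω) ^ 2) ∂P = ENNReal.ofReal (DD d p μ n) := by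
  set c : ℝ≥0∞ := ENNReal.ofReal (μ ^ n * μ ^ n) with hc
  have hc0 : c ≠ 0 := by
    rw [hc]
    simp only [ne_eq, ENNReal.ofReal_eq_zero, not_le]
    positivity
  have hcT : c ≠ ⊤ := ENNReal.ofReal_ne_top
  have hpt : ∀ ω, ENNReal.ofReal ((W n ω) ^ 2)
      = c⁻¹ * ∑ π : Pairs d n,
          (if pathOpen d ω π.1 ∧ pathOpen d ω π.2 then (1:ℝ≥0∞) else 0) := by
    intro ω
    rw [hW]
    rw [show ((Xcount d n ω : ℝ) / μ ^ n) ^ 2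
        = ((Xcount d n ω : ℝ)) ^ 2 / (μ ^ n * μ ^ n) from by
      rw [div_pow, sq, sq]]
    rw [ENNReal.ofReal_div_of_pos (by positivity), ← hc]
    rw [ENNReal.ofReal_pow (by positivity), ENNReal.ofReal_natCast]
    rw [ENNReal.div_eq_inv_mul]
    congr 1
    rw [Xcount_cast, sq, Finset.sum_mul_sum]
    rw [← Finset.univ_product_univ, Finset.sum_product]
    refine Finset.sum_congr rfl fun γ _ => Finset.sum_congr rfl fun γ' _ => ?_
    by_cases h1 : pathOpen d ω γ <;> by_cases h2 : pathOpen d ω γ' <;>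
      simp [h1, h2]
  rw [lintegral_congr hpt]
  have hmeasg : ∀ π : Pairs d n, Measurable (fun ω : Config d =>
      (if pathOpen d ω π.1 ∧ pathOpen d ω π.2 then (1:ℝ≥0∞) else 0)) := by
    intro π
    exact Measurable.ite (measurable_pair_event π) measurable_const measurable_const
  rw [lintegral_const_mul' _ _ (by simp [ENNReal.inv_ne_top]; exact hc0)]
  rw [lintegral_finset_sum _ (fun π _ => hmeasg π)]
  have hval : ∀ π : Pairs d n,
      (∫⁻ ω, (if pathOpen d ω π.1 ∧ pathOpen d ω π.2 then (1:ℝ≥0∞) else 0) ∂P)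
        = ENNReal.ofReal (μ ^ n * μ ^ n * W2 d p μ π) := by
    intro π
    have hint : (∫⁻ ω, (if pathOpen d ω π.1 ∧ pathOpen d ω π.2 then (1:ℝ≥0∞) else 0) ∂P)
        = P ({ω | pathOpen d ω π.1} ∩ {ω | pathOpen d ω π.2}) := by
      rw [← lintegral_indicator_one (measurable_pair_event π)]
      refine lintegral_congr fun ω => ?_
      rw [Set.indicator_apply]
      rfl
    rw [hint, measure_open_pair p P hindep hmarg π.1 π.2]
    rw [← ENNReal.ofReal_prod_of_nonneg (fun e _ => le_of_lt (hp0 e.2))]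
    rw [← w2_edges p μ (fun i => ne_of_gt (hp0 i)) (ne_of_gt hμpos) π.1 π.2]
  rw [Finset.sum_congr rfl fun π _ => hval π]
  rw [← ENNReal.ofReal_sum_of_nonneg (fun π _ =>
    mul_nonneg (by positivity) (w2_nonneg p μ (fun i => le_of_lt (hp0 i)) (le_of_lt hμpos) π))]
  rw [← Finset.mul_sum]
  have : (∑ π : Pairs d n, W2 d p μ π) = DD d p μ n := rfl
  rw [this]
  rw [ENNReal.ofReal_mul (by positivity), ← hc]
  rw [← mul_assoc, ENNReal.inv_mul_cancel hc0 hcT, one_mul]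

end Lint

section Qside

variable {d : ℕ} (p : Fin d → ℝ) (μ : ℝ)
variable {Ω : Type*} [MeasurableSpace Ω] (Q : Measure Ω) [IsProbabilityMeasure Q]
variable (ξ : Fin 2 × ℕ → Ω → (Fin d → ℤ))

def gsets (n : ℕ) (π : Pairs d n) (s : Fin 2 × ℕ) : Set (Fin d → ℤ) :=
  if h : s.2 < n then {stdBasis d (if s.1 = 0 then π.1 ⟨s.2, h⟩ else π.2 ⟨s.2, h⟩)}
  else Set.univ

lemma gsets_meas (n : ℕ) (π : Pairs d n) (s : Fin 2 × ℕ) : MeasurableSet (gsets n π s) := by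
  unfold gsets
  split
  · exact measurableSet_singleton _
  · exact MeasurableSet.univ

def Cyl (n : ℕ) (π : Pairs d n) : Set Ω :=
  ⋂ s ∈ ((Finset.univ : Finset (Fin 2)) ×ˢ Finset.range n), ξ s ⁻¹' (gsets n π s)

lemma cyl_steps {n : ℕ} {π : Pairs d n} {ω : Ω} (hω : ω ∈ Cyl ξ n π) (a : Fin 2) (j : Fin n) :
    ξ (a, (j : ℕ)) ω = stdBasis d (if a = 0 then π.1 j else π.2 j) := by
  unfold Cyl at hω
  rw [Set.mem_iInter₂] at hω
  have h1 := hω (a, (j : ℕ))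
    (Finset.mem_product.mpr ⟨Finset.mem_univ a, Finset.mem_range.mpr j.isLt⟩)
  rw [Set.mem_preimage] at h1
  unfold gsets at h1
  rw [dif_pos (j.isLt : ((a, (j:ℕ)).2 < n))] at h1
  rw [Set.mem_singleton_iff] at h1
  rw [h1]

lemma Q_cyl (hindepξ : iIndepFun ξ Q)
    (hlaw : ∀ a i, Q {ω | ξ a ω = stdBasis d i} = ENNReal.ofReal (p i / μ))
    (hp0 : ∀ i, 0 ≤ p i) (hμ0 : 0 ≤ μ) (n : ℕ) (π : Pairs d n) :
    Q (Cyl ξ n π) = ENNReal.ofReal (Wq d p μ π) := by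
  unfold Cyl
  rw [hindepξ.measure_inter_preimage_eq_mul (Finset.univ ×ˢ Finset.range n)
    (sets := gsets n π) (fun s _ => gsets_meas n π s)]
  rw [Finset.prod_product]
  have hQ : ∀ (a : Fin 2) (t : ℕ), Q (ξ (a, t) ⁻¹' gsets n π (a, t))
      = (if h : t < n then
          ENNReal.ofReal (qv d p μ (if a = 0 then π.1 ⟨t, h⟩ else π.2 ⟨t, h⟩)) else 1) := by
    intro a t
    unfold gsets
    by_cases h : t < n
    · rw [dif_pos h, dif_pos h]
      have h2 := hlaw (a, t) (if a = 0 then π.1 ⟨t, h⟩ else π.2 ⟨t, h⟩)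
      rw [show ξ (a, t) ⁻¹' {stdBasis d (if a = 0 then π.1 ⟨t, h⟩ else π.2 ⟨t, h⟩)}
          = {ω | ξ (a, t) ω = stdBasis d (if a = 0 then π.1 ⟨t, h⟩ else π.2 ⟨t, h⟩)} from rfl]
      rw [h2]
      rfl
    · rw [dif_neg h, dif_neg h, Set.preimage_univ, measure_univ]
  have hprod : ∀ a : Fin 2, (∏ t ∈ Finset.range n, Q (ξ (a, t) ⁻¹' gsets n π (a, t)))
      = ∏ j : Fin n, ENNReal.ofReal (qv d p μ (if a = 0 then π.1 j else π.2 j)) := by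
    intro a
    rw [Finset.prod_congr rfl fun t _ => hQ a t]
    rw [← Fin.prod_univ_eq_prod_range (fun t => if h : t < n then
      ENNReal.ofReal (qv d p μ (if a = 0 then π.1 ⟨t, h⟩ else π.2 ⟨t, h⟩)) else 1) n]
    refine Finset.prod_congr rfl fun j _ => ?_
    rw [dif_pos j.isLt]
  rw [Finset.prod_congr rfl fun a _ => hprod a]
  rw [Fin.prod_univ_two]
  have hA : ∀ j : Fin n, (if (0 : Fin 2) = 0 then π.1 j else π.2 j) = π.1 j := fun j => if_pos rfl
  have hB : ∀ j : Fin n, (if (1 : Fin 2) = 0 then π.1 j else π.2 j) = π.2 j :=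
    fun j => if_neg (by decide)
  simp only [hA, hB, eq_self_iff_true, if_true]
  unfold Wq
  rw [ENNReal.ofReal_prod_of_nonneg (fun j _ =>
    mul_nonneg (qv_nonneg p μ hp0 hμ0 _) (qv_nonneg p μ hp0 hμ0 _))]
  rw [show (∏ j : Fin n, ENNReal.ofReal (qv d p μ (π.1 j) * qv d p μ (π.2 j)))
      = ∏ j : Fin n, ENNReal.ofReal (qv d p μ (π.1 j)) * ENNReal.ofReal (qv d p μ (π.2 j)) from
    Finset.prod_congr rfl fun j _ => ENNReal.ofReal_mul (qv_nonneg p μ hp0 hμ0 _)]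
  rw [Finset.prod_mul_distrib]

lemma pathPos_full {n : ℕ} (γ : Fin n → Fin d) :
    pathPos d γ n = ∑ j : Fin n, stdBasis d (γ j) := by
  unfold pathPos
  rw [Finset.filter_true_of_mem (fun t _ => t.isLt)]

lemma cyl_subset_meet {n : ℕ} {π : Pairs d n} (hm : Meets d π n) :
    Cyl ξ n π ⊆ meetEvent ξ n := by
  intro ω hω
  have h0 : walkSum ξ 0 n ω = pathPos d π.1 n := by
    unfold walkSum
    rw [pathPos_full, ← Fin.sum_univ_eq_sum_range (fun t => ξ (0, t) ω) n]
    refine Finset.sum_congr rfl fun j _ => ?_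
    rw [cyl_steps ξ hω 0 j, if_pos rfl]
  have h1 : walkSum ξ 1 n ω = pathPos d π.2 n := by
    unfold walkSum
    rw [pathPos_full, ← Fin.sum_univ_eq_sum_range (fun t => ξ (1, t) ω) n]
    refine Finset.sum_congr rfl fun j _ => ?_
    rw [cyl_steps ξ hω 1 j, if_neg (by decide : ¬ (1 : Fin 2) = 0)]
  show walkSum ξ 0 n ω = walkSum ξ 1 n ω
  rw [h0, h1]
  exact hm

lemma cyl_disjoint {n : ℕ} {π ρ : Pairs d n} (hne : π ≠ ρ) :
    Disjoint (Cyl ξ n π) (Cyl ξ n ρ) := by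
  rw [Set.disjoint_left]
  intro ω hπ hρ
  apply hne
  refine Prod.ext (funext fun j => ?_) (funext fun j => ?_)
  · have e1 := cyl_steps ξ hπ 0 j
    have e2 := cyl_steps ξ hρ 0 j
    rw [if_pos rfl] at e1 e2
    exact stdBasis_inj (e1.symm.trans e2)
  · have e1 := cyl_steps ξ hπ 1 j
    have e2 := cyl_steps ξ hρ 1 j
    rw [if_neg (by decide : ¬ (1 : Fin 2) = 0)] at e1 e2
    exact stdBasis_inj (e1.symm.trans e2)

lemma measurable_cyl (hmeas : ∀ a, Measurable (ξ a)) {n : ℕ} (π : Pairs d n) :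
    MeasurableSet (Cyl ξ n π) := by
  unfold Cyl
  exact MeasurableSet.biInter (Set.to_countable _)
    fun s _ => (hmeas s) (gsets_meas n π s)

lemma aa_le_meet (hmeas : ∀ a, Measurable (ξ a))
    (hindepξ : iIndepFun ξ Q)
    (hlaw : ∀ a i, Q {ω | ξ a ω = stdBasis d i} = ENNReal.ofReal (p i / μ))
    (hp0 : ∀ i, 0 ≤ p i) (hμ0 : 0 ≤ μ) (n : ℕ) :
    ENNReal.ofReal (aa d p μ n) ≤ Q (meetEvent ξ n) := by
  unfold aa
  rw [ENNReal.ofReal_sum_of_nonneg (fun π _ => by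
    split
    · exact wq_nonneg p μ hp0 hμ0 _
    · exact le_rfl)]
  have hterm : ∀ π : Pairs d n, ENNReal.ofReal (if Meets d π n then Wq d p μ π else 0)
      = if Meets d π n then Q (Cyl ξ n π) else 0 := by
    intro π
    by_cases h : Meets d π n
    · rw [if_pos h, if_pos h, Q_cyl p μ Q ξ hindepξ hlaw hp0 hμ0 n π]
    · rw [if_neg h, if_neg h, ENNReal.ofReal_zero]
  rw [Finset.sum_congr rfl fun π _ => hterm π]
  rw [← Finset.sum_filter]
  rw [← measure_biUnion_finset ?pd (fun π _ => measurable_cyl ξ hmeas π)]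
  case pd =>
    intro π hπ ρ hρ hne
    exact cyl_disjoint ξ hne
  apply measure_mono
  refine Set.iUnion₂_subset fun π hπ => ?_
  exact cyl_subset_meet ξ (Finset.mem_filter.mp hπ).2

end Qside

theorem second_moment_bounded_of_lambda_le
    (d : ℕ) (hd : 1 ≤ d)
    (p : Fin d → ℝ) (hp : ∀ i, p i ∈ Set.Ioo (0 : ℝ) 1)
    (μ : ℝ) (hμ : μ = ∑ i, p i) (hμ1 : 1 < μ)
    -- the percolation model
    (P : Measure (Config d)) [IsProbabilityMeasure P]
    (hindep : iIndepFun (fun e (ω : Config d) => ω e) P)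
    (hmarg : ∀ e : (Fin d → ℤ) × Fin d, P {ω : Config d | ω e = true} = ENNReal.ofReal (p e.2))
    (W : ℕ → Config d → ℝ) (hW : ∀ n ω, W n ω = (Xcount d n ω : ℝ) / μ ^ n)
    -- two independent oriented random walks associated to q = (p₁/μ, …, p_d/μ)
    {Ω : Type*} [MeasurableSpace Ω] (Q : Measure Ω) [IsProbabilityMeasure Q]
    (ξ : Fin 2 × ℕ → Ω → (Fin d → ℤ))
    (hmeas : ∀ a, Measurable (ξ a))
    (hindepξ : iIndepFun ξ Q)
    (hlaw : ∀ a i, Q {ω | ξ a ω = stdBasis d i} = ENNReal.ofReal (p i / μ))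
    -- λ(q) ≤ μ - 1
    (hlam : (∑' n : ℕ, Q (meetEvent ξ (n + 1))) ≤ ENNReal.ofReal (μ - 1)) :
    (⨆ n : ℕ, ∫⁻ ω, ENNReal.ofReal ((W n ω) ^ 2) ∂P) < ⊤ := by
  have hp0 : ∀ i, 0 < p i := fun i => (hp i).1
  have hμpos : (0 : ℝ) < μ := by linarith
  haveI : Nonempty (Fin d) := ⟨⟨0, hd⟩⟩
  have hq : (∑ i, qv d p μ i) = 1 := by
    unfold qv
    rw [← Finset.sum_div, ← hμ]
    field_simp
  set π₀ : ℝ := ∑ i, (qv d p μ i) ^ 2 with hπ₀def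
  have hqpos : ∀ i, 0 < qv d p μ i := fun i => div_pos (hp0 i) hμpos
  have hπ : 0 < π₀ := Finset.sum_pos (fun i _ => pow_pos (hqpos i) 2) Finset.univ_nonempty
  have hπ1 : π₀ ≤ 1 := by
    rw [← hq]
    refine Finset.sum_le_sum fun i _ => ?_
    have h1 : qv d p μ i ≤ 1 := by
      rw [← hq]
      exact Finset.single_le_sum (fun j _ => le_of_lt (hqpos j)) (Finset.mem_univ i)
    nlinarith [hqpos i]
  -- the partial sums of λ(q) are bounded by μ - 1
  have hAA : ∀ N, AA p μ N ≤ μ - 1 := by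
    intro N
    have h1 : ENNReal.ofReal (AA p μ N) ≤ ENNReal.ofReal (μ - 1) := by
      calc ENNReal.ofReal (AA p μ N)
          = ∑ n ∈ Finset.Icc 1 N, ENNReal.ofReal (aa d p μ n) := by
            unfold AA
            exact ENNReal.ofReal_sum_of_nonneg fun n _ =>
              aa_nonneg p μ (fun i => le_of_lt (hp0 i)) (le_of_lt hμpos) n
        _ ≤ ∑ n ∈ Finset.Icc 1 N, Q (meetEvent ξ n) :=
            Finset.sum_le_sum fun n _ => aa_le_meet p μ Q ξ hmeas hindepξ hlaw
              (fun i => le_of_lt (hp0 i)) (le_of_lt hμpos) n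
        _ = ∑ k ∈ Finset.range N, Q (meetEvent ξ (1 + k)) := by
            rw [← Finset.Ico_add_one_right_eq_Icc, Finset.sum_Ico_eq_sum_range]
            simp
        _ = ∑ k ∈ Finset.range N, Q (meetEvent ξ (k + 1)) :=
            Finset.sum_congr rfl fun k _ => by rw [add_comm]
        _ ≤ ∑' k : ℕ, Q (meetEvent ξ (k + 1)) := ENNReal.sum_le_tsum _
        _ ≤ ENNReal.ofReal (μ - 1) := hlam
    exact (ENNReal.ofReal_le_ofReal_iff (by linarith)).mp h1
  -- the supremum L of the partial sums
  set L : ℝ := ⨆ N, AA p μ N with hLdef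
  have hbdd : BddAbove (Set.range fun N => AA p μ N) := by
    refine ⟨μ - 1, ?_⟩
    rintro x ⟨N, rfl⟩
    exact hAA N
  have hLle : L ≤ μ - 1 := ciSup_le hAA
  have hL0 : 0 ≤ L := by
    have hA0 : AA p μ 0 = 0 := by
      unfold AA
      simp
    have := le_ciSup hbdd 0
    rw [hA0] at this
    exact this
  -- the first-return weights are summable with sum at most (μ-1)/μ
  have hBB : ∀ M, BB p μ M ≤ (μ - 1) / μ := by
    intro M
    have hBM0 : 0 ≤ BB p μ M :=
      Finset.sum_nonneg fun m _ => bb_nonneg p μ (fun i => le_of_lt (hp0 i)) (le_of_lt hμpos) m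
    have hkey : BB p μ M * (1 + L) ≤ L := by
      have h2 : ∀ K, BB p μ M * (1 + AA p μ K) ≤ L := by
        intro K
        refine le_trans (renewal_ineq p μ (fun i => le_of_lt (hp0 i)) (le_of_lt hμpos) M K) ?_
        exact le_ciSup hbdd (M + K)
      have h3 : BB p μ M * L = ⨆ K, BB p μ M * AA p μ K :=
        Real.mul_iSup_of_nonneg hBM0 _
      have h4 : (⨆ K, BB p μ M * AA p μ K) ≤ L - BB p μ M := by
        refine ciSup_le fun K => ?_
        have h5 := h2 K
        rw [mul_add, mul_one] at h5
        linarith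
      rw [mul_add, mul_one, h3]
      linarith
    rw [le_div_iff₀ hμpos]
    have e1 : BB p μ M * μ * (1 + L) ≤ L * μ := by
      have := mul_le_mul_of_nonneg_right hkey (le_of_lt hμpos)
      nlinarith
    have e2 : L * μ ≤ (μ - 1) * (1 + L) := by nlinarith
    have hpos : (0 : ℝ) < 1 + L := by linarith
    exact le_of_mul_le_mul_right (le_trans e1 e2) hpos
  have hDD := DD_le p μ hμ hμ1 hp0 hq hBB hπ hπ1
  have hint : ∀ n : ℕ, (∫⁻ ω, ENNReal.ofReal ((W n ω) ^ 2) ∂P) = ENNReal.ofReal (DD d p μ n) :=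
    fun n => lintegral_W p μ P hindep hmarg hp0 hμpos W hW
  refine lt_of_le_of_lt (iSup_le fun n => ?_)
    (ENNReal.ofReal_lt_top : ENNReal.ofReal π₀⁻¹ < ⊤)
  rw [hint n]
  exact ENNReal.ofReal_le_ofReal (hDD n)
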